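/- Let k ≥ 1 and let a_1,…,a_k and b_1,…,b_k be real numbers satisfying the interlacing chain b_1 ≥ a_1 ≥ b_2 ≥ a_2 ≥ … ≥ a_{k−1} ≥ b_k ≥ |a_k|. Then there exists a vector Y = (y_1,…,y_{2k}) ∈ ℝ^{2k} such that the skew-symmetric matrix A(a,Y) is SO(2k+1)-conjugate to the block-diagonal matrix S = diag(L(b_1),…,L(b_k),0). -/

import Mathlib

open Matrix Polynomial

/-- The `m × m` real matrix built from the `2 × 2` blocks `L (c 0), …, L (c (n-1))`
(where `L a` has first row `(0, -a)` and second row `(a, 0)`) placed along the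
diagonal, all remaining entries being `0`.  For `m = 2n` this is
`diag (L c₁, …, L cₙ)`; for `m = 2n+1` this is `diag (L c₁, …, L cₙ, 0)`. -/
def diagL (m n : ℕ) (c : Fin n → ℝ) : Matrix (Fin m) (Fin m) ℝ :=
  Matrix.of fun i j =>
    if h : i.val / 2 = j.val / 2 ∧ i.val / 2 < n then
      if i.val % 2 = 0 ∧ j.val % 2 = 1 then -c ⟨i.val / 2, h.2⟩
      else if i.val % 2 = 1 ∧ j.val % 2 = 0 then c ⟨i.val / 2, h.2⟩
      else 0
    else 0

/-- `X` and `Y` are conjugate by a special orthogonal matrix: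
there is `B` with `BᵀB = 1`, `det B = 1` and `B X B⁻¹ = Y`. -/
def SOConj {m : ℕ} (X Y : Matrix (Fin m) (Fin m) ℝ) : Prop :=
  ∃ B : Matrix (Fin m) (Fin m) ℝ, Bᵀ * B = 1 ∧ B.det = 1 ∧ B * X * B⁻¹ = Y

/-- The `(2k+1) × (2k+1)` real skew-symmetric matrix `A(a, Y)` with top-left
`2k × 2k` block `diag (L a₁, …, L aₖ)`, last column `(y₁, …, y_{2k}, 0)ᵀ` and
last row `(-y₁, …, -y_{2k}, 0)`. -/
def Aodd (k : ℕ) (a : Fin k → ℝ) (Y : Fin (2*k) → ℝ) :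
    Matrix (Fin (2*k+1)) (Fin (2*k+1)) ℝ :=
  Matrix.of fun i j =>
    if hi : i.val < 2*k then
      if hj : j.val < 2*k then diagL (2*k) k a ⟨i.val, hi⟩ ⟨j.val, hj⟩
      else Y ⟨i.val, hi⟩
    else if hj : j.val < 2*k then -Y ⟨j.val, hj⟩ else 0

section OpenOddProof
open Filter Topology

namespace OpenOdd

variable {k : ℕ}

def idx0 (m : Fin k) : Fin (2*k+1) := ⟨2*m.val, by have := m.isLt; omega⟩
def idx1 (m : Fin k) : Fin (2*k+1) := ⟨2*m.val+1, by have := m.isLt; omega⟩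
def lastI (k : ℕ) : Fin (2*k+1) := ⟨2*k, by omega⟩

@[simp] lemma idx0_val (m : Fin k) : (idx0 m).val = 2*m.val := rfl
@[simp] lemma idx1_val (m : Fin k) : (idx1 m).val = 2*m.val+1 := rfl
@[simp] lemma lastI_val : (lastI k).val = 2*k := rfl

lemma idx0_ne_idx1 (m l : Fin k) : idx0 m ≠ idx1 l := by
  simp only [ne_eq, Fin.ext_iff, idx0_val, idx1_val]; omega
lemma idx0_ne_last (m : Fin k) : idx0 m ≠ lastI k := by
  have := m.isLt; simp only [ne_eq, Fin.ext_iff, idx0_val, lastI_val]; omega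
lemma idx1_ne_last (m : Fin k) : idx1 m ≠ lastI k := by
  have := m.isLt; simp only [ne_eq, Fin.ext_iff, idx1_val, lastI_val]; omega
lemma idx0_inj {m l : Fin k} (h : idx0 m = idx0 l) : m = l := by
  simp only [Fin.ext_iff, idx0_val] at h ⊢; omega
lemma idx1_inj {m l : Fin k} (h : idx1 m = idx1 l) : m = l := by
  simp only [Fin.ext_iff, idx1_val] at h ⊢; omega

lemma fin_cases3 (i : Fin (2*k+1)) :
    (∃ m : Fin k, i = idx0 m) ∨ (∃ m : Fin k, i = idx1 m) ∨ i = lastI k := by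
  rcases lt_or_ge i.val (2*k) with h | h
  · rcases Nat.even_or_odd i.val with ⟨t, ht⟩ | ⟨t, ht⟩
    · exact Or.inl ⟨⟨i.val / 2, by omega⟩, by simp only [Fin.ext_iff, idx0_val]; omega⟩
    · exact Or.inr (Or.inl ⟨⟨i.val / 2, by omega⟩, by simp only [Fin.ext_iff, idx1_val]; omega⟩)
  · exact Or.inr (Or.inr (by simp only [Fin.ext_iff, lastI_val]; have := i.isLt; omega))

section entries
variable (a : Fin k → ℝ) (Y : Fin (2*k) → ℝ) (b : Fin k → ℝ)

lemma diagL_01 (m : Fin k) (i j : Fin (2*k+1)) (hi : i.val = 2*m.val) (hj : j.val = 2*m.val+1) :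
    diagL (2*k+1) k b i j = -b m := by
  have hm := m.isLt
  simp only [diagL, Matrix.of_apply]
  rw [dif_pos (by omega), if_pos (by omega)]
  congr 1; exact congrArg b (Fin.ext (by simp only [Fin.val_mk]; omega))

lemma diagL_10 (m : Fin k) (i j : Fin (2*k+1)) (hi : i.val = 2*m.val+1) (hj : j.val = 2*m.val) :
    diagL (2*k+1) k b i j = b m := by
  have hm := m.isLt
  simp only [diagL, Matrix.of_apply]
  rw [dif_pos (by omega), if_neg (by omega), if_pos (by omega)]
  exact congrArg b (Fin.ext (by simp only [Fin.val_mk]; omega))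

lemma diagL_zero (i j : Fin (2*k+1))
    (h : ∀ m : Fin k, ¬(i.val = 2*m.val ∧ j.val = 2*m.val+1) ∧ ¬(i.val = 2*m.val+1 ∧ j.val = 2*m.val)) :
    diagL (2*k+1) k b i j = 0 := by
  simp only [diagL, Matrix.of_apply]
  split_ifs with h1 h2 h3
  · exfalso; obtain ⟨he, hlt⟩ := h1
    have := (h ⟨i.val/2, hlt⟩).1
    simp only [Fin.val_mk] at this
    exact this ⟨by omega, by omega⟩
  · exfalso; obtain ⟨he, hlt⟩ := h1
    have := (h ⟨i.val/2, hlt⟩).2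
    simp only [Fin.val_mk] at this
    exact this ⟨by omega, by omega⟩
  · rfl
  · rfl

-- Aodd entries
lemma Aodd_eq_diagL (i j : Fin (2*k+1)) (hi : i.val < 2*k) (hj : j.val < 2*k) :
    Aodd k a Y i j = diagL (2*k+1) k a i j := by
  simp only [Aodd, Matrix.of_apply, dif_pos hi, dif_pos hj]
  simp only [diagL, Matrix.of_apply, Fin.val_mk]

lemma Aodd_lastCol (i : Fin (2*k+1)) (hi : i.val < 2*k) :
    Aodd k a Y i (lastI k) = Y ⟨i.val, hi⟩ := by
  simp only [Aodd, Matrix.of_apply]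
  rw [dif_pos hi, dif_neg (by simp)]

lemma Aodd_lastRow (j : Fin (2*k+1)) (hj : j.val < 2*k) :
    Aodd k a Y (lastI k) j = -Y ⟨j.val, hj⟩ := by
  simp only [Aodd, Matrix.of_apply]
  rw [dif_neg (by simp), dif_pos hj]

lemma Aodd_corner : Aodd k a Y (lastI k) (lastI k) = 0 := by
  simp [Aodd]

end entries

end OpenOdd

namespace OpenOdd
variable {k : ℕ}

lemma skew_dot {n : ℕ} {A : Matrix (Fin n) (Fin n) ℝ} (hA : Aᵀ = -A) (x y : Fin n → ℝ) :
    x ⬝ᵥ A.mulVec y = -(A.mulVec x ⬝ᵥ y) := by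
  rw [Matrix.dotProduct_mulVec]
  have h2 : A.mulVec x = -(x ᵥ* A) := by
    rw [← Matrix.vecMul_transpose, hA, Matrix.vecMul_neg]
  rw [h2, neg_dotProduct, neg_neg]

lemma diagL_skew (c : Fin k → ℝ) (i j : Fin (2*k+1)) :
    diagL (2*k+1) k c j i = -(diagL (2*k+1) k c i j) := by
  simp only [diagL, Matrix.of_apply]
  by_cases h1 : j.val / 2 = i.val / 2 ∧ j.val / 2 < k
  · obtain ⟨hji, hlt⟩ := h1
    rw [dif_pos ⟨hji, hlt⟩, dif_pos ⟨hji.symm, by omega⟩]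
    simp only [hji]
    split_ifs <;> first | ring1 | (exfalso; omega)
  · rw [dif_neg h1, dif_neg (by intro hc; exact h1 ⟨hc.1.symm, hc.1 ▸ hc.2⟩)]
    ring

variable (a : Fin k → ℝ) (Y : Fin (2*k) → ℝ)

lemma Aodd_skew : (Aodd k a Y)ᵀ = -(Aodd k a Y) := by
  ext i j
  simp only [Matrix.transpose_apply, Matrix.neg_apply]
  rcases lt_or_ge i.val (2*k) with hi | hi <;> rcases lt_or_ge j.val (2*k) with hj | hj
  · rw [Aodd_eq_diagL a Y j i hj hi, Aodd_eq_diagL a Y i j hi hj]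
    exact diagL_skew a i j
  · have hjl : j = lastI k := Fin.ext (by have := j.isLt; simp only [lastI_val]; omega)
    subst hjl
    rw [Aodd_lastRow a Y i hi, Aodd_lastCol a Y i hi]
  · have hil : i = lastI k := Fin.ext (by have := i.isLt; simp only [lastI_val]; omega)
    subst hil
    rw [Aodd_lastRow a Y j hj, Aodd_lastCol a Y j hj, neg_neg]
  · have hjl : j = lastI k := Fin.ext (by have := j.isLt; simp only [lastI_val]; omega)
    have hil : i = lastI k := Fin.ext (by have := i.isLt; simp only [lastI_val]; omega)
    subst hjl; subst hil
    rw [Aodd_corner]; ring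

lemma mulVec_expand (M : Matrix (Fin (2*k+1)) (Fin (2*k+1)) ℝ) (x : Fin (2*k+1) → ℝ)
    (i : Fin (2*k+1)) : M.mulVec x i = ∑ q, M i q * x q := rfl

lemma mulVec_idx0 (x : Fin (2*k+1) → ℝ) (m : Fin k) :
    (Aodd k a Y).mulVec x (idx0 m) =
      -(a m) * x (idx1 m) + Y ⟨2*m.val, by have := m.isLt; omega⟩ * x (lastI k) := by
  have hm := m.isLt
  rw [mulVec_expand]
  rw [← Finset.sum_subset (Finset.subset_univ ({idx1 m, lastI k} : Finset _))]
  · rw [Finset.sum_pair (idx1_ne_last m)]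
    rw [Aodd_eq_diagL a Y _ _ (by simp only [idx0_val]; omega) (by simp only [idx1_val]; omega),
      diagL_01 a m _ _ rfl rfl, Aodd_lastCol a Y _ (by simp only [idx0_val]; omega)]
    rfl
  · intro q _ hq
    simp only [Finset.mem_insert, Finset.mem_singleton, not_or] at hq
    obtain ⟨hq1, hq2⟩ := hq
    have hq1' : q.val ≠ 2*m.val+1 := fun hc => hq1 (Fin.ext (by simp [hc]))
    have hq2' : q.val ≠ 2*k := fun hc => hq2 (Fin.ext (by simp [hc]))
    rcases lt_or_ge q.val (2*k) with h | h
    · rw [Aodd_eq_diagL a Y _ _ (by simp only [idx0_val]; omega) h, diagL_zero, zero_mul]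
      intro m'; have := m'.isLt
      constructor <;> simp only [idx0_val] <;> omega
    · exfalso; have := q.isLt; omega

lemma mulVec_idx1 (x : Fin (2*k+1) → ℝ) (m : Fin k) :
    (Aodd k a Y).mulVec x (idx1 m) =
      a m * x (idx0 m) + Y ⟨2*m.val+1, by have := m.isLt; omega⟩ * x (lastI k) := by
  have hm := m.isLt
  rw [mulVec_expand]
  rw [← Finset.sum_subset (Finset.subset_univ ({idx0 m, lastI k} : Finset _))]
  · rw [Finset.sum_pair (idx0_ne_last m)]
    rw [Aodd_eq_diagL a Y _ _ (by simp only [idx1_val]; omega) (by simp only [idx0_val]; omega),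
      diagL_10 a m _ _ rfl rfl, Aodd_lastCol a Y _ (by simp only [idx1_val]; omega)]
    rfl
  · intro q _ hq
    simp only [Finset.mem_insert, Finset.mem_singleton, not_or] at hq
    obtain ⟨hq1, hq2⟩ := hq
    have hq1' : q.val ≠ 2*m.val := fun hc => hq1 (Fin.ext (by simp [hc]))
    have hq2' : q.val ≠ 2*k := fun hc => hq2 (Fin.ext (by simp [hc]))
    rcases lt_or_ge q.val (2*k) with h | h
    · rw [Aodd_eq_diagL a Y _ _ (by simp only [idx1_val]; omega) h, diagL_zero, zero_mul]
      intro m'; have := m'.isLt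
      constructor <;> simp only [idx1_val] <;> omega
    · exfalso; have := q.isLt; omega

lemma mulVec_last (x : Fin (2*k+1) → ℝ) :
    (Aodd k a Y).mulVec x (lastI k) = -∑ q : Fin (2*k), Y q * x ⟨q.val, by have := q.isLt; omega⟩ := by
  rw [mulVec_expand, Fin.sum_univ_castSucc]
  have hlast : (Fin.last (2*k)) = lastI k := rfl
  rw [hlast, Aodd_corner, zero_mul, add_zero]
  rw [← Finset.sum_neg_distrib]
  apply Finset.sum_congr rfl
  intro q _
  have hq := q.isLt
  rw [Aodd_lastRow a Y _ (by simpa using hq)]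
  have h2 : (⟨(q.castSucc : Fin (2*k+1)).val, by simpa using hq⟩ : Fin (2*k)) = q := Fin.ext rfl
  rw [h2]
  have h3 : (q.castSucc : Fin (2*k+1)) = (⟨q.val, by have := q.isLt; omega⟩ : Fin (2*k+1)) := Fin.ext rfl
  rw [h3]
  ring

end OpenOdd

namespace OpenOdd
open Polynomial

lemma prod_neg_split {ι : Type*} (s : Finset ι) (g : ι → ℝ) :
    ∏ l ∈ s, (-(g l)) = (-1)^s.card * ∏ l ∈ s, g l := by
  rw [← Finset.prod_const, ← Finset.prod_mul_distrib]
  simp [neg_mul]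

lemma cauchy_system (k : ℕ) (α β : Fin k → ℝ)
    (h1 : ∀ j, α j < β j) (h2 : ∀ i j : Fin k, i < j → β j < α i) :
    ∃ r : Fin k → ℝ, (∀ j, 0 ≤ r j) ∧ ∀ m, ∑ j, r j / (β m - α j) = 1 := by
  classical
  rcases Nat.eq_zero_or_pos k with hk0 | hk
  · exact ⟨0, fun j => le_refl _, fun m => absurd m.isLt (by omega)⟩
  -- basic order facts
  have hαβ : ∀ j l : Fin k, l ≤ j → α j < β l := by
    intro j l hlj
    rcases eq_or_lt_of_le hlj with h | hlt
    · subst h; exact h1 _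
    · exact lt_trans (lt_trans (h1 j) (h2 l j hlt)) (h1 l)
  have hαinj : Function.Injective α := by
    intro i j hij
    rcases lt_trichotomy i j with h | h | h
    · have := lt_trans (h1 j) (h2 i j h); exfalso; linarith
    · exact h
    · have := lt_trans (h1 i) (h2 j i h); exfalso; linarith
  have hβα_ne : ∀ m j : Fin k, β m - α j ≠ 0 := by
    intro m j
    rcases le_or_gt m j with h | h
    · exact sub_ne_zero.mpr (ne_of_gt (hαβ j m h))
    · exact sub_ne_zero.mpr (ne_of_lt (h2 j m h))
  -- denominators
  set d : Fin k → ℝ := fun j => ∏ l ∈ Finset.univ.erase j, (α j - α l) with hd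
  have hdne : ∀ j, d j ≠ 0 := fun j =>
    Finset.prod_ne_zero_iff.mpr fun l hl =>
      sub_ne_zero.mpr fun hc => (Finset.mem_erase.mp hl).1 (hαinj hc.symm)
  set r : Fin k → ℝ := fun j => (-∏ l, (α j - β l)) / d j with hr
  -- positivity of r
  have hrpos : ∀ j, 0 ≤ r j := by
    intro j
    have hnum : ∏ l, (α j - β l) =
        (-1)^((Finset.univ.filter (fun l : Fin k => l ≤ j)).card) *
          ((∏ l ∈ Finset.univ.filter (fun l : Fin k => l ≤ j), (β l - α j)) *
           ∏ l ∈ Finset.univ.filter (fun l : Fin k => ¬ l ≤ j), (α j - β l)) := by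
      rw [← Finset.prod_filter_mul_prod_filter_not Finset.univ (fun l : Fin k => l ≤ j)
        (fun l => α j - β l)]
      rw [show ∏ l ∈ Finset.univ.filter (fun l : Fin k => l ≤ j), (α j - β l)
          = ∏ l ∈ Finset.univ.filter (fun l : Fin k => l ≤ j), -(β l - α j) by
        apply Finset.prod_congr rfl; intro l _; ring]
      rw [prod_neg_split]
      ring
    have hden : d j =
        (-1)^(((Finset.univ.erase j).filter (fun l : Fin k => l < j)).card) *
          ((∏ l ∈ (Finset.univ.erase j).filter (fun l : Fin k => l < j), (α l - α j)) *
           ∏ l ∈ (Finset.univ.erase j).filter (fun l : Fin k => ¬ l < j), (α j - α l)) := by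
      simp only [hd]
      rw [← Finset.prod_filter_mul_prod_filter_not (Finset.univ.erase j) (fun l : Fin k => l < j)
        (fun l => α j - α l)]
      rw [show ∏ l ∈ (Finset.univ.erase j).filter (fun l : Fin k => l < j), (α j - α l)
          = ∏ l ∈ (Finset.univ.erase j).filter (fun l : Fin k => l < j), -(α l - α j) by
        apply Finset.prod_congr rfl; intro l _; ring]
      rw [prod_neg_split]
      ring
    have hcard : (Finset.univ.filter (fun l : Fin k => l ≤ j)).card
        = ((Finset.univ.erase j).filter (fun l : Fin k => l < j)).card + 1 := by
      have hins : Finset.univ.filter (fun l : Fin k => l ≤ j)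
          = insert j ((Finset.univ.erase j).filter (fun l : Fin k => l < j)) := by
        ext l
        simp only [Finset.mem_filter, Finset.mem_univ, true_and, Finset.mem_insert,
          Finset.mem_erase]
        constructor
        · intro h
          rcases eq_or_lt_of_le h with h' | h'
          · left; exact h'
          · right; exact ⟨⟨ne_of_lt h', trivial⟩, h'⟩
        · rintro (rfl | ⟨⟨hne, -⟩, hlt⟩)
          · exact le_refl _
          · exact le_of_lt hlt
      rw [hins, Finset.card_insert_of_notMem (by simp)]
    -- positive pieces
    have hN1 : 0 < ∏ l ∈ Finset.univ.filter (fun l : Fin k => l ≤ j), (β l - α j) :=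
      Finset.prod_pos fun l hl => sub_pos.mpr (hαβ j l (Finset.mem_filter.mp hl).2)
    have hN2 : 0 < ∏ l ∈ Finset.univ.filter (fun l : Fin k => ¬ l ≤ j), (α j - β l) :=
      Finset.prod_pos fun l hl => sub_pos.mpr (h2 j l (lt_of_not_ge (Finset.mem_filter.mp hl).2))
    have hD1 : 0 < ∏ l ∈ (Finset.univ.erase j).filter (fun l : Fin k => l < j), (α l - α j) :=
      Finset.prod_pos fun l hl => sub_pos.mpr
        (lt_trans (h1 j) (h2 l j (Finset.mem_filter.mp hl).2))
    have hD2 : 0 < ∏ l ∈ (Finset.univ.erase j).filter (fun l : Fin k => ¬ l < j), (α j - α l) := by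
      apply Finset.prod_pos
      intro l hl
      have hml := Finset.mem_filter.mp hl
      have hjl : j < l := lt_of_le_of_ne (le_of_not_gt hml.2) (Finset.mem_erase.mp hml.1).1.symm
      exact sub_pos.mpr (lt_trans (h1 l) (h2 j l hjl))
    rw [hr]
    simp only []
    rw [hnum, hden, hcard, pow_succ]
    rw [show -((-1 : ℝ) ^ ((Finset.univ.erase j).filter (fun l : Fin k => l < j)).card * -1 *
        ((∏ l ∈ Finset.univ.filter (fun l : Fin k => l ≤ j), (β l - α j)) *
           ∏ l ∈ Finset.univ.filter (fun l : Fin k => ¬ l ≤ j), (α j - β l)))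
      = (-1 : ℝ) ^ ((Finset.univ.erase j).filter (fun l : Fin k => l < j)).card *
        ((∏ l ∈ Finset.univ.filter (fun l : Fin k => l ≤ j), (β l - α j)) *
           ∏ l ∈ Finset.univ.filter (fun l : Fin k => ¬ l ≤ j), (α j - β l)) from by ring]
    rw [mul_div_mul_left _ _ (by positivity : ((-1 : ℝ) ^ ((Finset.univ.erase j).filter (fun l : Fin k => l < j)).card) ≠ 0)]
    positivity
  refine ⟨r, hrpos, ?_⟩
  -- the polynomial identity
  set P : ℝ[X] := ∏ l, (X - C (α l)) with hP
  set Q : ℝ[X] := ∏ l, (X - C (β l)) with hQ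
  set Pj : Fin k → ℝ[X] := fun j => ∏ l ∈ Finset.univ.erase j, (X - C (α l)) with hPj
  have hPm : P.Monic := monic_prod_of_monic _ _ fun l _ => monic_X_sub_C _
  have hQm : Q.Monic := monic_prod_of_monic _ _ fun l _ => monic_X_sub_C _
  have hPjm : ∀ j, (Pj j).Monic := fun j => monic_prod_of_monic _ _ fun l _ => monic_X_sub_C _
  have hPdeg : P.degree = (k : ℕ) := by
    rw [hP, degree_prod]
    simp [degree_X_sub_C]
  have hQdeg : Q.degree = (k : ℕ) := by
    rw [hQ, degree_prod]
    simp [degree_X_sub_C]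
  have hPjdeg : ∀ j, (Pj j).degree = ((k - 1 : ℕ) : WithBot ℕ) := by
    intro j
    rw [hPj, degree_prod]
    simp only [degree_X_sub_C, Finset.sum_const, Finset.card_erase_of_mem (Finset.mem_univ _),
      Fintype.card_fin, nsmul_eq_mul, mul_one, Finset.card_univ]
  have hDiff : (P - Q).degree < (k : ℕ) := by
    rw [← hPdeg]
    exact degree_sub_lt (hPdeg.trans hQdeg.symm) hPm.ne_zero (by rw [hPm.leadingCoeff, hQm.leadingCoeff])
  have hSumDeg : (∑ j, C (r j) * Pj j).degree < (k : ℕ) := by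
    apply lt_of_le_of_lt (degree_sum_le _ _)
    apply Finset.sup_lt_iff (by exact_mod_cast WithBot.bot_lt_coe k) |>.mpr
    intro j _
    calc (C (r j) * Pj j).degree ≤ (C (r j)).degree + (Pj j).degree := degree_mul_le _ _
    _ ≤ 0 + (Pj j).degree := add_le_add degree_C_le le_rfl
    _ = (Pj j).degree := by rw [zero_add]
    _ < (k : ℕ) := by rw [hPjdeg j]; exact_mod_cast (show k - 1 < k by omega)
  have hD0 : P - Q - ∑ j, C (r j) * Pj j = 0 := by
    by_cases hz : P - Q - ∑ j, C (r j) * Pj j = 0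
    · exact hz
    apply eq_zero_of_natDegree_lt_card_of_eval_eq_zero _ hαinj
    · intro i
      have hPe : P.eval (α i) = 0 := by
        rw [hP, eval_prod]
        exact Finset.prod_eq_zero (Finset.mem_univ i) (by simp)
      have hSe : (∑ j, C (r j) * Pj j).eval (α i) = r i * (Pj i).eval (α i) := by
        rw [eval_finset_sum]
        rw [Finset.sum_eq_single i]
        · simp
        · intro j _ hji
          have : (Pj j).eval (α i) = 0 := by
            rw [hPj, eval_prod]
            exact Finset.prod_eq_zero (Finset.mem_erase.mpr ⟨hji.symm, Finset.mem_univ i⟩) (by simp)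
          simp [this]
        · intro h; exact absurd (Finset.mem_univ i) h
      have hPje : (Pj i).eval (α i) = d i := by
        rw [hPj, eval_prod, hd]
        apply Finset.prod_congr rfl
        intro l _; simp
      have hQe : Q.eval (α i) = ∏ l, (α i - β l) := by
        rw [hQ, eval_prod]
        apply Finset.prod_congr rfl
        intro l _; simp
      rw [eval_sub, eval_sub, hPe, hSe, hPje, hQe, hr]
      simp only []
      rw [div_mul_cancel₀ _ (hdne i)]
      ring
    · have hle := degree_sub_le (P - Q) (∑ j, C (r j) * Pj j)
      have hlt : (P - Q - ∑ j, C (r j) * Pj j).degree < ((k : ℕ) : WithBot ℕ) :=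
        lt_of_le_of_lt hle (max_lt hDiff hSumDeg)
      have := (natDegree_lt_iff_degree_lt hz).mpr hlt
      simpa using this
  -- evaluate at β m
  intro m
  have hkey : P = Q + ∑ j, C (r j) * Pj j := by
    have h' : P - (Q + ∑ j, C (r j) * Pj j) = 0 := by rw [← sub_sub]; exact hD0
    linear_combination h'
  have hQe : Q.eval (β m) = 0 := by
    rw [hQ, eval_prod]
    exact Finset.prod_eq_zero (Finset.mem_univ m) (by simp)
  have hPe : P.eval (β m) = ∏ l, (β m - α l) := by
    rw [hP, eval_prod]; apply Finset.prod_congr rfl; intro l _; simp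
  have hPje : ∀ j, (Pj j).eval (β m) = ∏ l ∈ Finset.univ.erase j, (β m - α l) := by
    intro j; rw [hPj, eval_prod]; apply Finset.prod_congr rfl; intro l _; simp
  have hTne : ∏ l, (β m - α l) ≠ 0 := Finset.prod_ne_zero_iff.mpr fun l _ => hβα_ne m l
  have hEval : ∏ l, (β m - α l) = ∑ j, r j * ∏ l ∈ Finset.univ.erase j, (β m - α l) := by
    have := congrArg (Polynomial.eval (β m)) hkey
    rw [eval_add, eval_finset_sum, hPe, hQe] at this
    rw [this, zero_add]
    apply Finset.sum_congr rfl
    intro j _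
    rw [eval_mul, eval_C, hPje j]
  calc ∑ j, r j / (β m - α j)
      = ∑ j, (r j * ∏ l ∈ Finset.univ.erase j, (β m - α l)) / ∏ l, (β m - α l) := by
        apply Finset.sum_congr rfl
        intro j _
        rw [← Finset.mul_prod_erase Finset.univ _ (Finset.mem_univ j)]
        rw [div_eq_div_iff (hβα_ne m j) (by
          exact mul_ne_zero (hβα_ne m j) (Finset.prod_ne_zero_iff.mpr fun l _ => hβα_ne m l))]
        ring
    _ = (∑ j, r j * ∏ l ∈ Finset.univ.erase j, (β m - α l)) / ∏ l, (β m - α l) := by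
        rw [Finset.sum_div]
    _ = 1 := by rw [← hEval, div_self hTne]

lemma pair_cross {n : ℕ} {A : Matrix (Fin n) (Fin n) ℝ} (hA : Aᵀ = -A)
    {b₁ b₂ : ℝ} {u₁ v₁ u₂ v₂ : Fin n → ℝ}
    (h₁u : A.mulVec u₁ = b₁ • v₁) (h₁v : A.mulVec v₁ = -(b₁ • u₁))
    (h₂u : A.mulVec u₂ = b₂ • v₂) (h₂v : A.mulVec v₂ = -(b₂ • u₂))
    (hb1 : b₁ ≠ 0) (hb2 : b₂ ≠ 0) (hbne : b₁^2 ≠ b₂^2) :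
    u₁ ⬝ᵥ u₂ = 0 ∧ u₁ ⬝ᵥ v₂ = 0 ∧ v₁ ⬝ᵥ u₂ = 0 ∧ v₁ ⬝ᵥ v₂ = 0 := by
  have hsq : b₂^2 - b₁^2 ≠ 0 := sub_ne_zero.mpr (Ne.symm hbne)
  have raw1 : b₂ * (u₁ ⬝ᵥ v₂) = -(b₁ * (v₁ ⬝ᵥ u₂)) := by
    have h := skew_dot hA u₁ u₂
    rw [h₂u, h₁u] at h
    simpa [dotProduct_smul, smul_dotProduct, smul_eq_mul] using h
  have raw2 : -(b₂ * (u₁ ⬝ᵥ u₂)) = -(b₁ * (v₁ ⬝ᵥ v₂)) := by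
    have h := skew_dot hA u₁ v₂
    rw [h₂v, h₁u] at h
    simpa [dotProduct_smul, smul_dotProduct, smul_eq_mul,
      dotProduct_neg, neg_dotProduct] using h
  have raw3 : b₂ * (v₁ ⬝ᵥ v₂) = b₁ * (u₁ ⬝ᵥ u₂) := by
    have h := skew_dot hA v₁ u₂
    rw [h₂u, h₁v] at h
    simpa [dotProduct_smul, smul_dotProduct, smul_eq_mul,
      dotProduct_neg, neg_dotProduct] using h
  have raw4 : -(b₂ * (v₁ ⬝ᵥ u₂)) = b₁ * (u₁ ⬝ᵥ v₂) := by
    have h := skew_dot hA v₁ v₂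
    rw [h₂v, h₁v] at h
    simpa [dotProduct_smul, smul_dotProduct, smul_eq_mul,
      dotProduct_neg, neg_dotProduct] using h
  have hP : u₁ ⬝ᵥ u₂ = 0 := by
    have h0 : (b₂^2 - b₁^2) * (u₁ ⬝ᵥ u₂) = 0 := by
      linear_combination (-b₂) * raw2 + b₁ * raw3
    exact (mul_eq_zero.mp h0).resolve_left hsq
  have hT : v₁ ⬝ᵥ v₂ = 0 := by
    have h' : b₂ * (v₁ ⬝ᵥ v₂) = 0 := by linear_combination raw3 + b₁ * hP
    exact (mul_eq_zero.mp h').resolve_left hb2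
  have hQ : u₁ ⬝ᵥ v₂ = 0 := by
    have h0 : (b₂^2 - b₁^2) * (u₁ ⬝ᵥ v₂) = 0 := by
      linear_combination b₂ * raw1 + b₁ * raw4
    exact (mul_eq_zero.mp h0).resolve_left hsq
  have hR : v₁ ⬝ᵥ u₂ = 0 := by
    have h' : b₁ * (v₁ ⬝ᵥ u₂) = 0 := by linear_combination raw1 - b₂ * hQ
    exact (mul_eq_zero.mp h').resolve_left hb1
  exact ⟨hP, hQ, hR, hT⟩

lemma pair_self {n : ℕ} {A : Matrix (Fin n) (Fin n) ℝ} (hA : Aᵀ = -A)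
    {b : ℝ} {u v : Fin n → ℝ}
    (hu : A.mulVec u = b • v) (hv : A.mulVec v = -(b • u)) (hb : b ≠ 0) :
    u ⬝ᵥ v = 0 ∧ u ⬝ᵥ u = v ⬝ᵥ v := by
  have raw1 : b * (u ⬝ᵥ v) = -(b * (v ⬝ᵥ u)) := by
    have h := skew_dot hA u u
    rw [hu] at h
    simpa [dotProduct_smul, smul_dotProduct, smul_eq_mul] using h
  have huv : u ⬝ᵥ v = 0 := by
    have h0 : b * (2 * (u ⬝ᵥ v)) = 0 := by
      rw [dotProduct_comm v u] at raw1; linear_combination raw1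
    have := (mul_eq_zero.mp h0).resolve_left hb
    linarith
  have raw2 : -(b * (u ⬝ᵥ u)) = -(b * (v ⬝ᵥ v)) := by
    have h := skew_dot hA u v
    rw [hu, hv] at h
    simpa [dotProduct_smul, smul_dotProduct, smul_eq_mul,
      dotProduct_neg, neg_dotProduct] using h
  refine ⟨huv, ?_⟩
  have h0 : b * (u ⬝ᵥ u - v ⬝ᵥ v) = 0 := by linear_combination -raw2
  have := (mul_eq_zero.mp h0).resolve_left hb
  linarith

lemma pair_kernel {n : ℕ} {A : Matrix (Fin n) (Fin n) ℝ} (hA : Aᵀ = -A)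
    {b : ℝ} {u v w : Fin n → ℝ}
    (hu : A.mulVec u = b • v) (hv : A.mulVec v = -(b • u))
    (hw : A.mulVec w = 0) (hb : b ≠ 0) :
    w ⬝ᵥ u = 0 ∧ w ⬝ᵥ v = 0 := by
  have raw1 : b * (w ⬝ᵥ v) = 0 := by
    have h := skew_dot hA w u
    rw [hu, hw] at h
    simpa [dotProduct_smul, smul_eq_mul, zero_dotProduct] using h
  have raw2 : -(b * (w ⬝ᵥ u)) = 0 := by
    have h := skew_dot hA w v
    rw [hv, hw] at h
    simpa [dotProduct_smul, smul_eq_mul, zero_dotProduct,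
      dotProduct_neg] using h
  constructor
  · have h0 : b * (w ⬝ᵥ u) = 0 := by linear_combination -raw2
    exact (mul_eq_zero.mp h0).resolve_left hb
  · exact (mul_eq_zero.mp raw1).resolve_left hb

end OpenOdd

namespace OpenOdd

lemma conj_apply {n : ℕ} (B A : Matrix (Fin n) (Fin n) ℝ) (i j : Fin n) :
    (B * A * Bᵀ) i j = (fun p => B i p) ⬝ᵥ A.mulVec (fun q => B j q) := by
  simp only [Matrix.mul_apply, Matrix.mulVec, dotProduct, Matrix.transpose_apply,
    Finset.sum_mul, Finset.mul_sum]
  rw [Finset.sum_comm]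
  apply Finset.sum_congr rfl; intro p _
  apply Finset.sum_congr rfl; intro q _
  ring

lemma mul_transpose_apply {n : ℕ} (B : Matrix (Fin n) (Fin n) ℝ) (i j : Fin n) :
    (B * Bᵀ) i j = (fun p => B i p) ⬝ᵥ (fun p => B j p) := by
  simp only [Matrix.mul_apply, Matrix.transpose_apply, dotProduct]

lemma sum_even {k : ℕ} (F : Fin (2*k) → ℝ) (hodd : ∀ q : Fin (2*k), q.val % 2 = 1 → F q = 0) :
    ∑ q, F q = ∑ l : Fin k, F ⟨2*l.val, by have := l.isLt; omega⟩ := by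
  classical
  have himg : ∑ q ∈ Finset.univ.image (fun l : Fin k => (⟨2*l.val, by have := l.isLt; omega⟩ : Fin (2*k))), F q
      = ∑ l : Fin k, F ⟨2*l.val, by have := l.isLt; omega⟩ := by
    apply Finset.sum_image
    intro x _ y _ h
    simp only [Fin.mk.injEq] at h
    exact Fin.ext (by omega)
  rw [← himg]
  apply (Finset.sum_subset (Finset.subset_univ _) _).symm
  intro q _ hq
  rcases Nat.even_or_odd q.val with ⟨t, ht⟩ | ⟨t, ht⟩
  · exfalso
    apply hq
    apply Finset.mem_image.mpr
    exact ⟨⟨q.val/2, by have := q.isLt; omega⟩, Finset.mem_univ _, Fin.ext (by simp only [Fin.val_mk]; omega)⟩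
  · exact hodd q (by omega)

set_option maxHeartbeats 1000000 in
lemma strict_case (k : ℕ) (hk : 1 ≤ k) (a b : Fin k → ℝ)
    (h1 : ∀ j : Fin k, (a j)^2 < (b j)^2)
    (h2 : ∀ i j : Fin k, i < j → (b j)^2 < (a i)^2)
    (hbpos : ∀ j, 0 < b j) :
    ∃ Y : Fin (2*k) → ℝ, SOConj (Aodd k a Y) (diagL (2*k+1) k b) := by
  classical
  obtain ⟨r, hrpos, hsys⟩ := cauchy_system k (fun j => (a j)^2) (fun j => (b j)^2) h1 h2
  set c : Fin k → ℝ := fun j => Real.sqrt (r j) with hc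
  have hc2 : ∀ j, (c j)^2 = r j := fun j => Real.sq_sqrt (hrpos j)
  set Y : Fin (2*k) → ℝ :=
    fun q => if q.val % 2 = 0 then c ⟨q.val/2, by have := q.isLt; omega⟩ else 0 with hY
  have hYeven : ∀ (q : Fin (2*k)) (hq : q.val % 2 = 0),
      Y q = c ⟨q.val/2, by have := q.isLt; omega⟩ := by
    intro q hq; simp only [hY]; rw [if_pos hq]
  have hYodd : ∀ (q : Fin (2*k)), q.val % 2 = 1 → Y q = 0 := by
    intro q hq; simp only [hY]; rw [if_neg (by omega)]
  set A := Aodd k a Y with hA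
  have hskew : Aᵀ = -A := Aodd_skew a Y
  -- inequality facts
  have hba : ∀ m j : Fin k, (b m)^2 - (a j)^2 ≠ 0 := by
    intro m j
    rcases lt_trichotomy m j with h | h | h
    · have := h2 m j h; have := h1 m; have := h1 j; intro hc0; nlinarith
    · subst h; have := h1 m; intro hc0; nlinarith
    · have := h2 j m h; intro hc0; nlinarith
  have hab : ∀ m j : Fin k, (a j)^2 - (b m)^2 ≠ 0 := by
    intro m j; have := hba m j; intro hc0; apply this; linarith
  have hbne : ∀ m l : Fin k, m ≠ l → (b m)^2 ≠ (b l)^2 := by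
    intro m l hne
    rcases lt_or_gt_of_ne hne with h | h
    · have := h2 m l h; have := h1 m; intro hc0; nlinarith
    · have := h2 l m h; have := h1 l; intro hc0; nlinarith
  have hbne0 : ∀ m, b m ≠ 0 := fun m => ne_of_gt (hbpos m)
  -- vectors u, v
  set u : Fin k → Fin (2*k+1) → ℝ := fun m i =>
    if h : i.val < 2*k then
      (if i.val % 2 = 1 then
        a ⟨i.val/2, by omega⟩ * c ⟨i.val/2, by omega⟩ /
          ((a ⟨i.val/2, by omega⟩)^2 - (b m)^2)
      else 0)
    else 1 with hu
  set v : Fin k → Fin (2*k+1) → ℝ := fun m i =>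
    if h : i.val < 2*k then
      (if i.val % 2 = 0 then
        b m * c ⟨i.val/2, by omega⟩ / ((b m)^2 - (a ⟨i.val/2, by omega⟩)^2)
      else 0)
    else 0 with hv
  have hu_even : ∀ m (i : Fin (2*k+1)), i.val < 2*k → i.val % 2 = 0 → u m i = 0 := by
    intro m i h hp; simp only [hu]; rw [dif_pos h, if_neg (by omega)]
  have hv_odd : ∀ m (i : Fin (2*k+1)), i.val < 2*k → i.val % 2 = 1 → v m i = 0 := by
    intro m i h hp; simp only [hv]; rw [dif_pos h, if_neg (by omega)]
  have hu0 : ∀ m l, u m (idx0 l) = 0 := by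
    intro m l; have := l.isLt
    exact hu_even m _ (by simp only [idx0_val]; omega) (by simp only [idx0_val]; omega)
  have hv1 : ∀ m l, v m (idx1 l) = 0 := by
    intro m l; have := l.isLt
    exact hv_odd m _ (by simp only [idx1_val]; omega) (by simp only [idx1_val]; omega)
  have hu1 : ∀ m l, u m (idx1 l) = a l * c l / ((a l)^2 - (b m)^2) := by
    intro m l; have hlt := l.isLt
    simp only [hu]
    rw [dif_pos (show (idx1 l).val < 2*k by simp only [idx1_val]; omega),
      if_pos (show (idx1 l).val % 2 = 1 by simp only [idx1_val]; omega)]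
    simp only [show (idx1 l).val / 2 = l.val from by simp only [idx1_val]; omega, Fin.eta]
  have hv0 : ∀ m l, v m (idx0 l) = b m * c l / ((b m)^2 - (a l)^2) := by
    intro m l; have hlt := l.isLt
    simp only [hv]
    rw [dif_pos (show (idx0 l).val < 2*k by simp only [idx0_val]; omega),
      if_pos (show (idx0 l).val % 2 = 0 by simp only [idx0_val]; omega)]
    simp only [show (idx0 l).val / 2 = l.val from by simp only [idx0_val]; omega, Fin.eta]
  have hulast : ∀ m, u m (lastI k) = 1 := by
    intro m; simp only [hu]; rw [dif_neg (by simp only [lastI_val]; omega)]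
  have hvlast : ∀ m, v m (lastI k) = 0 := by
    intro m; simp only [hv]; rw [dif_neg (by simp only [lastI_val]; omega)]
  -- eigen relations
  have hAu : ∀ m, A.mulVec (u m) = b m • v m := by
    intro m; funext i
    rcases fin_cases3 i with ⟨l, rfl⟩ | ⟨l, rfl⟩ | rfl
    · have hlt := l.isLt
      rw [hA, mulVec_idx0 a Y (u m) l]
      rw [hu1 m l, hulast m, hYeven ⟨2*l.val, by omega⟩ (by simp only [Fin.val_mk]; omega)]
      simp only [Pi.smul_apply, smul_eq_mul, hv0 m l]
      simp only [show ((⟨2*l.val, by omega⟩ : Fin (2*k))).val / 2 = l.val from by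
        simp only [Fin.val_mk]; omega, Fin.eta]
      have h1' := hab m l
      have h2' := hba m l
      field_simp
      ring
    · rw [hA, mulVec_idx1 a Y (u m) l, hu0 m l,
        hYodd ⟨2*l.val+1, by have := l.isLt; omega⟩ (by simp only [Fin.val_mk]; omega)]
      simp only [Pi.smul_apply, smul_eq_mul, hv1 m l]
      ring
    · rw [hA, mulVec_last a Y (u m)]
      simp only [Pi.smul_apply, smul_eq_mul, hvlast m, mul_zero]
      rw [neg_eq_zero]
      apply Finset.sum_eq_zero
      intro q _
      rcases Nat.even_or_odd q.val with ⟨t, ht⟩ | ⟨t, ht⟩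
      · rw [hu_even m ⟨q.val, by have := q.isLt; omega⟩ (by have := q.isLt; simp only [Fin.val_mk]; omega)
          (by simp only [Fin.val_mk]; omega), mul_zero]
      · rw [hYodd q (by omega), zero_mul]
  have hAv : ∀ m, A.mulVec (v m) = -(b m • u m) := by
    intro m; funext i
    rcases fin_cases3 i with ⟨l, rfl⟩ | ⟨l, rfl⟩ | rfl
    · rw [hA, mulVec_idx0 a Y (v m) l, hv1 m l, hvlast m]
      simp only [Pi.neg_apply, Pi.smul_apply, smul_eq_mul, hu0 m l]
      ring
    · have hlt := l.isLt
      rw [hA, mulVec_idx1 a Y (v m) l, hv0 m l, hvlast m]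
      simp only [Pi.neg_apply, Pi.smul_apply, smul_eq_mul, hu1 m l]
      have h1' := hab m l
      have h2' := hba m l
      field_simp
      ring
    · rw [hA, mulVec_last a Y (v m)]
      have hv0r : ∀ (l : Fin k) (i : Fin (2*k+1)), i.val = 2*l.val →
          v m i = b m * c l / ((b m)^2 - (a l)^2) := by
        intro l i hi; have hlt := l.isLt
        simp only [hv]
        rw [dif_pos (by omega), if_pos (by omega)]
        simp only [show i.val / 2 = l.val from by omega, Fin.eta]
      have hYevenr : ∀ (l : Fin k) (q : Fin (2*k)), q.val = 2*l.val → Y q = c l := by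
        intro l q hq; simp only [hY]
        rw [if_pos (by omega)]
        simp only [show q.val / 2 = l.val from by omega, Fin.eta]
      have hsys' : ∑ l, (c l)^2 / ((b m)^2 - (a l)^2) = 1 := by
        have h' := hsys m
        simp only [← hc2] at h'
        exact h'
      have hsum : ∑ q : Fin (2*k), Y q * v m ⟨q.val, by have := q.isLt; omega⟩ = b m := by
        rw [sum_even _ (fun q hq => by rw [hYodd q hq, zero_mul])]
        have hterm : ∀ l : Fin k, Y ⟨2*l.val, by have := l.isLt; omega⟩ *
            v m ⟨(⟨2*l.val, by have := l.isLt; omega⟩ : Fin (2*k)).val, by have := l.isLt; omega⟩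
            = b m * ((c l)^2 / ((b m)^2 - (a l)^2)) := by
          intro l
          rw [hYevenr l _ (by simp only [Fin.val_mk]),
            hv0r l _ (by simp only [Fin.val_mk])]
          ring
        rw [Finset.sum_congr rfl (fun l _ => hterm l), ← Finset.mul_sum, hsys', mul_one]
      rw [hsum]
      simp only [Pi.neg_apply, Pi.smul_apply, smul_eq_mul, hulast m, mul_one]
  -- kernel vector
  have hw0ex : ∃ w0 : Fin (2*k+1) → ℝ, A.mulVec w0 = 0 ∧ 1 ≤ w0 ⬝ᵥ w0 := by
    set jk : Fin k := ⟨k-1, by omega⟩ with hjk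
    by_cases hak : a jk = 0
    · refine ⟨fun i => if i = idx1 jk then 1 else 0, ?_, ?_⟩
      · funext i
        rcases fin_cases3 i with ⟨l, rfl⟩ | ⟨l, rfl⟩ | rfl
        · rw [hA, mulVec_idx0 a Y _ l]
          rw [if_neg (Ne.symm (idx1_ne_last jk))]
          rcases eq_or_ne l jk with rfl | hne
          · rw [if_pos rfl, hak]; simp
          · rw [if_neg (fun hc => hne (idx1_inj hc))]; simp
        · rw [hA, mulVec_idx1 a Y _ l]
          rw [if_neg (idx0_ne_idx1 l jk), if_neg (Ne.symm (idx1_ne_last jk))]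
          simp
        · rw [hA, mulVec_last a Y _]
          simp only [Pi.zero_apply, neg_eq_zero]
          apply Finset.sum_eq_zero
          intro q _
          by_cases hq : (⟨q.val, by have := q.isLt; omega⟩ : Fin (2*k+1)) = idx1 jk
          · rw [hYodd q (by
              have : q.val = 2*jk.val+1 := by
                have := congrArg Fin.val hq
                simpa using this
              omega), zero_mul]
          · rw [if_neg hq, mul_zero]
      · have hcoord : (fun i => if i = idx1 jk then (1:ℝ) else 0) (idx1 jk) = 1 := if_pos rfl
        calc (1:ℝ) = (if idx1 jk = idx1 jk then (1:ℝ) else 0) * (if idx1 jk = idx1 jk then (1:ℝ) else 0) := by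
              rw [if_pos rfl]; ring
        _ ≤ ∑ i, (if i = idx1 jk then (1:ℝ) else 0) * (if i = idx1 jk then (1:ℝ) else 0) := by
              apply Finset.single_le_sum (f := fun i => (if i = idx1 jk then (1:ℝ) else 0) * (if i = idx1 jk then (1:ℝ) else 0))
                (fun i _ => mul_self_nonneg _) (Finset.mem_univ (idx1 jk))
        _ = _ := rfl
    · have hanz : ∀ j, a j ≠ 0 := by
        intro j
        rcases eq_or_ne j jk with rfl | hne
        · exact hak
        · have hjlt : j < jk := by
            rw [Fin.lt_def]
            have h01 := j.isLt
            have h02 : j.val ≠ k-1 := fun hc => hne (Fin.ext (by simp only [hjk, Fin.val_mk]; omega))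
            simp only [hjk, Fin.val_mk]
            omega
          have h' := h2 j jk hjlt
          have hbj := hbpos jk
          intro hc0
          rw [hc0] at h'
          nlinarith
      refine ⟨fun i => if h : i.val < 2*k then
          (if i.val % 2 = 1 then c ⟨i.val/2, by omega⟩ / a ⟨i.val/2, by omega⟩ else 0)
        else 1, ?_, ?_⟩
      · funext i
        rcases fin_cases3 i with ⟨l, rfl⟩ | ⟨l, rfl⟩ | rfl
        · have hlt := l.isLt
          rw [hA, mulVec_idx0 a Y _ l]
          rw [dif_pos (show (idx1 l).val < 2*k by simp only [idx1_val]; omega)]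
          rw [if_pos (show (idx1 l).val % 2 = 1 by simp only [idx1_val]; omega)]
          rw [dif_neg (show ¬ (lastI k).val < 2*k by simp only [lastI_val]; omega)]
          rw [hYeven ⟨2*l.val, by omega⟩ (by simp only [Fin.val_mk]; omega)]
          simp only [show (idx1 l).val / 2 = l.val from by simp only [idx1_val]; omega,
            show ((⟨2*l.val, by omega⟩ : Fin (2*k))).val / 2 = l.val from by
              simp only [Fin.val_mk]; omega, Fin.eta]
          rw [Pi.zero_apply]
          field_simp [hanz l]
          try ring
        · have hlt := l.isLt
          rw [hA, mulVec_idx1 a Y _ l]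
          rw [dif_pos (show (idx0 l).val < 2*k by simp only [idx0_val]; omega)]
          rw [if_neg (show ¬ (idx0 l).val % 2 = 1 by simp only [idx0_val]; omega)]
          rw [hYodd ⟨2*l.val+1, by omega⟩ (by simp only [Fin.val_mk]; omega)]
          simp
        · rw [hA, mulVec_last a Y _]
          simp only [Pi.zero_apply, neg_eq_zero]
          apply Finset.sum_eq_zero
          intro q _
          have hqlt := q.isLt
          rcases Nat.even_or_odd q.val with ⟨t, ht⟩ | ⟨t, ht⟩
          · rw [dif_pos (show (⟨q.val, by omega⟩ : Fin (2*k+1)).val < 2*k by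
                simp only [Fin.val_mk]; omega)]
            rw [if_neg (show ¬ (⟨q.val, by omega⟩ : Fin (2*k+1)).val % 2 = 1 by
                simp only [Fin.val_mk]; omega)]
            rw [mul_zero]
          · rw [hYodd q (by omega), zero_mul]
      · calc (1:ℝ) = 1 * 1 := by ring
        _ ≤ _ := by
            have := Finset.single_le_sum
              (f := fun i : Fin (2*k+1) => (if h : i.val < 2*k then
                (if i.val % 2 = 1 then c ⟨i.val/2, by omega⟩ / a ⟨i.val/2, by omega⟩ else 0)
              else 1) * (if h : i.val < 2*k then
                (if i.val % 2 = 1 then c ⟨i.val/2, by omega⟩ / a ⟨i.val/2, by omega⟩ else 0)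
              else 1)) (fun i _ => mul_self_nonneg _) (Finset.mem_univ (lastI k))
            simp only [dif_neg (show ¬ (lastI k).val < 2*k by simp only [lastI_val]; omega)] at this
            exact this
  obtain ⟨w0, hw0, hw0n⟩ := hw0ex
  -- orthogonality facts
  have hps : ∀ m, u m ⬝ᵥ v m = 0 ∧ u m ⬝ᵥ u m = v m ⬝ᵥ v m :=
    fun m => pair_self hskew (hAu m) (hAv m) (hbne0 m)
  have hcross : ∀ m l, m ≠ l →
      u m ⬝ᵥ u l = 0 ∧ u m ⬝ᵥ v l = 0 ∧ v m ⬝ᵥ u l = 0 ∧ v m ⬝ᵥ v l = 0 :=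
    fun m l h => pair_cross hskew (hAu m) (hAv m) (hAu l) (hAv l) (hbne0 m) (hbne0 l) (hbne m l h)
  have hker : ∀ m, w0 ⬝ᵥ u m = 0 ∧ w0 ⬝ᵥ v m = 0 :=
    fun m => pair_kernel hskew (hAu m) (hAv m) hw0 (hbne0 m)
  have hupos : ∀ m, (1:ℝ) ≤ u m ⬝ᵥ u m := by
    intro m
    calc (1:ℝ) = u m (lastI k) * u m (lastI k) := by rw [hulast]; ring
    _ ≤ ∑ i, u m i * u m i := Finset.single_le_sum (f := fun i => u m i * u m i)
        (fun i _ => mul_self_nonneg _) (Finset.mem_univ _)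
    _ = u m ⬝ᵥ u m := rfl
  set nu : Fin k → ℝ := fun m => Real.sqrt (u m ⬝ᵥ u m) with hnu
  have hnusq : ∀ m, nu m * nu m = u m ⬝ᵥ u m := fun m => Real.mul_self_sqrt (by linarith [hupos m])
  have hnupos : ∀ m, 0 < nu m := fun m => Real.sqrt_pos.mpr (by linarith [hupos m])
  set s0 : ℝ := Real.sqrt (w0 ⬝ᵥ w0) with hs0
  have hs0sq : s0 * s0 = w0 ⬝ᵥ w0 := Real.mul_self_sqrt (by linarith)
  have hs0pos : 0 < s0 := Real.sqrt_pos.mpr (by linarith)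
  -- the rows of B
  set w : Fin (2*k+1) → Fin (2*k+1) → ℝ := fun i =>
    if h : i.val < 2*k then
      (if i.val % 2 = 0 then (nu ⟨i.val/2, by omega⟩)⁻¹ • u ⟨i.val/2, by omega⟩
       else (nu ⟨i.val/2, by omega⟩)⁻¹ • v ⟨i.val/2, by omega⟩)
    else s0⁻¹ • w0 with hwdef
  have hwidx0 : ∀ m, w (idx0 m) = (nu m)⁻¹ • u m := by
    intro m; have := m.isLt
    simp only [hwdef]
    rw [dif_pos (show (idx0 m).val < 2*k by simp only [idx0_val]; omega),
      if_pos (show (idx0 m).val % 2 = 0 by simp only [idx0_val]; omega)]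
    simp only [show (idx0 m).val / 2 = m.val from by simp only [idx0_val]; omega, Fin.eta]
  have hwidx1 : ∀ m, w (idx1 m) = (nu m)⁻¹ • v m := by
    intro m; have := m.isLt
    simp only [hwdef]
    rw [dif_pos (show (idx1 m).val < 2*k by simp only [idx1_val]; omega),
      if_neg (show ¬ (idx1 m).val % 2 = 0 by simp only [idx1_val]; omega)]
    simp only [show (idx1 m).val / 2 = m.val from by simp only [idx1_val]; omega, Fin.eta]
  have hwlast : w (lastI k) = s0⁻¹ • w0 := by
    simp only [hwdef]
    rw [dif_neg (show ¬ (lastI k).val < 2*k by simp only [lastI_val]; omega)]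
  -- Gram identities
  have hGram : ∀ i j, w i ⬝ᵥ w j = if i = j then 1 else 0 := by
    intro i j
    rcases fin_cases3 i with ⟨m, rfl⟩ | ⟨m, rfl⟩ | rfl
    · rcases fin_cases3 j with ⟨l, rfl⟩ | ⟨l, rfl⟩ | rfl
      · rw [hwidx0 m, hwidx0 l]
        simp only [smul_dotProduct, dotProduct_smul, smul_eq_mul]
        rcases eq_or_ne m l with rfl | hne
        · rw [if_pos rfl, ← hnusq m]
          field_simp [ne_of_gt (hnupos m)]
        · rw [if_neg (fun hc => hne (idx0_inj hc)), (hcross m l hne).1]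
          ring
      · rw [hwidx0 m, hwidx1 l]
        simp only [smul_dotProduct, dotProduct_smul, smul_eq_mul]
        rw [if_neg (idx0_ne_idx1 m l)]
        rcases eq_or_ne m l with rfl | hne
        · rw [(hps m).1]; ring
        · rw [(hcross m l hne).2.1]; ring
      · rw [hwidx0 m, hwlast]
        simp only [smul_dotProduct, dotProduct_smul, smul_eq_mul]
        rw [if_neg (idx0_ne_last m), dotProduct_comm, (hker m).1]
        ring
    · rcases fin_cases3 j with ⟨l, rfl⟩ | ⟨l, rfl⟩ | rfl
      · rw [hwidx1 m, hwidx0 l]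
        simp only [smul_dotProduct, dotProduct_smul, smul_eq_mul]
        rw [if_neg (fun hc => idx0_ne_idx1 l m hc.symm)]
        rcases eq_or_ne m l with rfl | hne
        · rw [dotProduct_comm, (hps m).1]; ring
        · rw [(hcross m l hne).2.2.1]; ring
      · rw [hwidx1 m, hwidx1 l]
        simp only [smul_dotProduct, dotProduct_smul, smul_eq_mul]
        rcases eq_or_ne m l with rfl | hne
        · rw [if_pos rfl, ← (hps m).2, ← hnusq m]
          field_simp [ne_of_gt (hnupos m)]
        · rw [if_neg (fun hc => hne (idx1_inj hc)), (hcross m l hne).2.2.2]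
          ring
      · rw [hwidx1 m, hwlast]
        simp only [smul_dotProduct, dotProduct_smul, smul_eq_mul]
        rw [if_neg (idx1_ne_last m), dotProduct_comm, (hker m).2]
        ring
    · rcases fin_cases3 j with ⟨l, rfl⟩ | ⟨l, rfl⟩ | rfl
      · rw [hwlast, hwidx0 l]
        simp only [smul_dotProduct, dotProduct_smul, smul_eq_mul]
        rw [if_neg (fun hc => idx0_ne_last l hc.symm), (hker l).1]
        ring
      · rw [hwlast, hwidx1 l]
        simp only [smul_dotProduct, dotProduct_smul, smul_eq_mul]
        rw [if_neg (fun hc => idx1_ne_last l hc.symm), (hker l).2]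
        ring
      · rw [hwlast]
        simp only [smul_dotProduct, dotProduct_smul, smul_eq_mul]
        simp only [if_true]
        rw [← hs0sq]
        field_simp [ne_of_gt hs0pos]
  -- assemble B
  set B : Matrix (Fin (2*k+1)) (Fin (2*k+1)) ℝ := Matrix.of w with hB
  have hBBT : B * Bᵀ = 1 := by
    ext i j
    rw [mul_transpose_apply]
    exact (hGram i j).trans (Matrix.one_apply).symm
  have hBTB : Bᵀ * B = 1 := mul_eq_one_comm.mp hBBT
  set S := diagL (2*k+1) k b with hS
  have hconj : B * A * Bᵀ = S := by
    ext i j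
    rw [conj_apply]
    have hdot : (fun p => B i p) ⬝ᵥ A.mulVec (fun q => B j q) = w i ⬝ᵥ A.mulVec (w j) := rfl
    rw [hdot]
    rcases fin_cases3 j with ⟨m, rfl⟩ | ⟨m, rfl⟩ | rfl
    · rw [hwidx0 m, Matrix.mulVec_smul, hAu m, smul_comm ((nu m)⁻¹) (b m) (v m),
        ← hwidx1 m, dotProduct_smul, smul_eq_mul, hGram]
      by_cases hij : i = idx1 m
      · subst hij
        rw [if_pos rfl, hS, diagL_10 b m _ _ rfl rfl]
        ring
      · rw [if_neg hij, mul_zero, hS]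
        have hval : i.val ≠ 2*m.val+1 := fun hc => hij (Fin.ext (by simp only [idx1_val]; omega))
        refine (diagL_zero b i (idx0 m) fun m' => ?_).symm
        have := m'.isLt
        constructor
        · rintro ⟨e1, e2⟩; simp only [idx0_val] at e2; omega
        · rintro ⟨e1, e2⟩; simp only [idx0_val] at e2; omega
    · rw [hwidx1 m, Matrix.mulVec_smul, hAv m, smul_neg, smul_comm ((nu m)⁻¹) (b m) (u m),
        ← hwidx0 m, dotProduct_neg, dotProduct_smul, smul_eq_mul, hGram]
      by_cases hij : i = idx0 m
      · subst hij
        rw [if_pos rfl, hS, diagL_01 b m _ _ rfl rfl]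
        ring
      · rw [if_neg hij, mul_zero, neg_zero, hS]
        have hval : i.val ≠ 2*m.val := fun hc => hij (Fin.ext (by simp only [idx0_val]; omega))
        refine (diagL_zero b i (idx1 m) fun m' => ?_).symm
        have := m'.isLt
        constructor
        · rintro ⟨e1, e2⟩; simp only [idx1_val] at e2; omega
        · rintro ⟨e1, e2⟩; simp only [idx1_val] at e2; omega
    · rw [hwlast, Matrix.mulVec_smul, hw0, smul_zero, dotProduct_zero, hS]
      refine (diagL_zero b i (lastI k) fun m' => ?_).symm
      have := m'.isLt
      constructor
      · rintro ⟨e1, e2⟩; simp only [lastI_val] at e2; omega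
      · rintro ⟨e1, e2⟩; simp only [lastI_val] at e2; omega
  -- determinant
  have hdet2 : B.det = 1 ∨ B.det = -1 := by
    have h' : B.det * B.det = 1 := by
      have h0 := congrArg Matrix.det hBBT
      rwa [Matrix.det_mul, Matrix.det_transpose, Matrix.det_one] at h0
    exact mul_self_eq_one_iff.mp h'
  refine ⟨Y, ?_⟩
  rcases hdet2 with hdet | hdet
  · exact ⟨B, hBTB, hdet, by rw [Matrix.inv_eq_right_inv hBBT]; exact hconj⟩
  · set d0 : Fin (2*k+1) → ℝ := fun i => if i = lastI k then (-1:ℝ) else 1 with hd0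
    set E := Matrix.diagonal d0 with hE
    have hdd : ∀ i, d0 i * d0 i = 1 := by
      intro i; simp only [hd0]; split_ifs <;> norm_num
    have hEE : E * E = 1 := by
      rw [hE, Matrix.diagonal_mul_diagonal]
      rw [show (fun i => d0 i * d0 i) = fun _ => (1:ℝ) from funext hdd, Matrix.diagonal_one]
    have hET : Eᵀ = E := by rw [hE, Matrix.diagonal_transpose]
    have hdetE : E.det = -1 := by
      rw [hE, Matrix.det_diagonal]
      rw [Finset.prod_eq_single (lastI k) (fun i _ hne => by simp only [hd0]; rw [if_neg hne])
        (fun h => absurd (Finset.mem_univ _) h)]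
      simp only [hd0]; norm_num
    have hESE : E * S * E = S := by
      ext i j
      rw [hE, Matrix.mul_diagonal, Matrix.diagonal_mul]
      by_cases hi : i = lastI k
      · subst hi
        have hrow : S (lastI k) j = 0 := diagL_zero b _ _ fun m' => by
          have := m'.isLt
          constructor
          · rintro ⟨e1, e2⟩; simp only [lastI_val] at e1; omega
          · rintro ⟨e1, e2⟩; simp only [lastI_val] at e1; omega
        rw [hrow]; ring
      · by_cases hj : j = lastI k
        · subst hj
          have hcol : S i (lastI k) = 0 := diagL_zero b _ _ fun m' => by
            have := m'.isLt
            constructor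
            · rintro ⟨e1, e2⟩; simp only [lastI_val] at e2; omega
            · rintro ⟨e1, e2⟩; simp only [lastI_val] at e2; omega
          rw [hcol]; ring
        · simp only [hd0]; rw [if_neg hi, if_neg hj]; ring
    have hEBT : (E * B)ᵀ = Bᵀ * E := by rw [Matrix.transpose_mul, hET]
    have hBBT' : (E * B) * (E * B)ᵀ = 1 := by
      rw [hEBT, Matrix.mul_assoc E B (Bᵀ * E), ← Matrix.mul_assoc B Bᵀ E, hBBT,
        Matrix.one_mul, hEE]
    have hBTB' : (E * B)ᵀ * (E * B) = 1 := mul_eq_one_comm.mp hBBT'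
    have hdet' : (E * B).det = 1 := by
      rw [Matrix.det_mul, hdetE, hdet]; norm_num
    refine ⟨E * B, hBTB', hdet', ?_⟩
    rw [Matrix.inv_eq_right_inv hBBT', hEBT]
    have hassoc : E * B * A * (Bᵀ * E) = E * (B * A * Bᵀ) * E := by
      simp only [Matrix.mul_assoc]
    rw [hassoc, hconj, hESE]

end OpenOdd

namespace OpenOdd

lemma entry_bound {n : ℕ} (B S : Matrix (Fin n) (Fin n) ℝ) {C : ℝ}
    (hB : ∀ p q, |B p q| ≤ 1) (hS : ∀ p q, |S p q| ≤ C) (p q : Fin n) :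
    |(Bᵀ * S * B) p q| ≤ (n:ℝ)^2 * C := by
  have hC0 : 0 ≤ C := le_trans (abs_nonneg _) (hS p q)
  have hn : (0:ℝ) ≤ (n:ℝ) := Nat.cast_nonneg n
  have hrow : ∀ x, |(Bᵀ * S) p x| ≤ (n:ℝ)*C := by
    intro x
    rw [Matrix.mul_apply]
    calc |∑ y, Bᵀ p y * S y x| ≤ ∑ y, |Bᵀ p y * S y x| := Finset.abs_sum_le_sum_abs _ _
    _ ≤ ∑ _y : Fin n, C := by
        apply Finset.sum_le_sum; intro y _
        rw [abs_mul, Matrix.transpose_apply]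
        calc |B y p| * |S y x| ≤ 1 * C :=
          mul_le_mul (hB y p) (hS y x) (abs_nonneg _) zero_le_one
        _ = C := one_mul C
    _ = (n:ℝ)*C := by rw [Finset.sum_const, Finset.card_univ, Fintype.card_fin, nsmul_eq_mul]
  calc |(Bᵀ * S * B) p q| = |∑ x, (Bᵀ * S) p x * B x q| := by rw [Matrix.mul_apply]
  _ ≤ ∑ x, |(Bᵀ * S) p x * B x q| := Finset.abs_sum_le_sum_abs _ _
  _ ≤ ∑ _x : Fin n, (n:ℝ)*C := by
      apply Finset.sum_le_sum; intro x _
      rw [abs_mul]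
      calc |(Bᵀ*S) p x| * |B x q| ≤ ((n:ℝ)*C) * 1 :=
        mul_le_mul (hrow x) (hB x q) (abs_nonneg _) (by positivity)
      _ = (n:ℝ)*C := mul_one _
  _ = (n:ℝ)*((n:ℝ)*C) := by rw [Finset.sum_const, Finset.card_univ, Fintype.card_fin, nsmul_eq_mul]
  _ = (n:ℝ)^2*C := by ring

lemma diagL_entry_bound {k : ℕ} (bb : Fin k → ℝ) {C : ℝ} (hC : 0 ≤ C)
    (hbb : ∀ j, |bb j| ≤ C) (p q : Fin (2*k+1)) : |diagL (2*k+1) k bb p q| ≤ C := by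
  simp only [diagL, Matrix.of_apply]
  split_ifs
  · rw [abs_neg]; exact hbb _
  · exact hbb _
  · simpa using hC
  · simpa using hC

lemma diagL_tendsto {k : ℕ} (cs : ℕ → Fin k → ℝ) (cl : Fin k → ℝ)
    (h : ∀ j, Tendsto (fun n => cs n j) atTop (𝓝 (cl j))) (p q : Fin (2*k+1)) :
    Tendsto (fun n => diagL (2*k+1) k (cs n) p q) atTop (𝓝 (diagL (2*k+1) k cl p q)) := by
  simp only [diagL, Matrix.of_apply]
  by_cases hc : p.val/2 = q.val/2 ∧ p.val/2 < k
  · simp only [dif_pos hc]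
    by_cases hc2 : p.val % 2 = 0 ∧ q.val % 2 = 1
    · simp only [if_pos hc2]; exact (h _).neg
    · simp only [if_neg hc2]
      by_cases hc3 : p.val % 2 = 1 ∧ q.val % 2 = 0
      · simp only [if_pos hc3]; exact h _
      · simp only [if_neg hc3]; exact tendsto_const_nhds
  · simp only [dif_neg hc]; exact tendsto_const_nhds

end OpenOdd

open OpenOdd Filter Topology

set_option maxHeartbeats 1600000 in
/-- Lemma (openodd), existence part: under the interlacing chain
`b₁ ≥ a₁ ≥ b₂ ≥ a₂ ≥ … ≥ a_{k-1} ≥ b_k ≥ |a_k|` there is `Y ∈ ℝ^{2k}` with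
`A(a, Y)` SO(2k+1)-conjugate to `S = diag (L b₁, …, L b_k, 0)`. -/
theorem statement0 (k : ℕ) (hk : 1 ≤ k) (a b : Fin k → ℝ)
    (h1 : ∀ i : ℕ, ∀ h : i + 1 < k, b ⟨i, by omega⟩ ≥ a ⟨i, by omega⟩)
    (h2 : ∀ i : ℕ, ∀ h : i + 1 < k, a ⟨i, by omega⟩ ≥ b ⟨i + 1, h⟩)
    (h3 : b ⟨k - 1, by omega⟩ ≥ |a ⟨k - 1, by omega⟩|) :
    ∃ Y : Fin (2*k) → ℝ, SOConj (Aodd k a Y) (diagL (2*k+1) k b) := by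
  classical
  -- chain facts
  have step : ∀ i : ℕ, (h : i+1 < k) → b ⟨i+1, h⟩ ≤ b ⟨i, by omega⟩ :=
    fun i h => le_trans (h2 i h) (h1 i h)
  have hb_mono : ∀ j : ℕ, (hj : j < k) → ∀ i : ℕ, ∀ _hij : i ≤ j, b ⟨j, hj⟩ ≤ b ⟨i, by omega⟩ := by
    intro j
    induction j with
    | zero =>
        intro hj i hij
        exact le_of_eq (congrArg b (Fin.ext (by simp only [Fin.val_mk]; omega)))
    | succ m ih =>
        intro hj i hij
        rcases Nat.lt_or_ge i (m+1) with h | h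
        · exact le_trans (step m hj) (ih (by omega) i (by omega))
        · have : i = m+1 := by omega
          subst this
          exact le_refl _
  have hb_last : ∀ j : ℕ, (hj : j < k) → b ⟨k-1, by omega⟩ ≤ b ⟨j, hj⟩ := by
    intro j hj
    have := hb_mono (k-1) (by omega) j (by omega)
    exact this
  have H4 : ∀ j : Fin k, 0 ≤ b j := by
    intro j
    have h5 := le_trans (abs_nonneg (a ⟨k-1, by omega⟩)) h3
    have := hb_last j.val j.isLt
    have hje : (⟨j.val, j.isLt⟩ : Fin k) = j := Fin.ext rfl
    rw [hje] at this
    linarith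
  have H6 : ∀ j : Fin k, a j ≤ b j := by
    intro j
    rcases Nat.lt_or_ge (j.val+1) k with h | h
    · have := h1 j.val h
      have hje : (⟨j.val, by omega⟩ : Fin k) = j := Fin.ext rfl
      rw [hje] at this
      linarith
    · have hje : j = (⟨k-1, by omega⟩ : Fin k) := Fin.ext (by have := j.isLt; simp only [Fin.val_mk]; omega)
      rw [hje]
      exact le_trans (le_abs_self _) h3
  have H5 : ∀ j : Fin k, 0 ≤ a j + b j := by
    intro j
    rcases Nat.lt_or_ge (j.val+1) k with h | h
    · have h2' := h2 j.val h
      have hje : (⟨j.val, by omega⟩ : Fin k) = j := Fin.ext rfl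
      rw [hje] at h2'
      have := H4 ⟨j.val+1, h⟩
      have := H4 j
      linarith
    · have hje : j = (⟨k-1, by omega⟩ : Fin k) := Fin.ext (by have := j.isLt; simp only [Fin.val_mk]; omega)
      rw [hje]
      have := neg_abs_le (a (⟨k-1, by omega⟩ : Fin k))
      linarith [h3]
  have H2 : ∀ i j : Fin k, i < j → b j ≤ a i := by
    intro i j hij
    have hij' : i.val < j.val := hij
    have h2' := h2 i.val (by have := j.isLt; omega)
    have hmono := hb_mono j.val j.isLt (i.val+1) (by omega)
    have hje : (⟨j.val, j.isLt⟩ : Fin k) = j := Fin.ext rfl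
    have hie : (⟨i.val, by omega⟩ : Fin k) = i := Fin.ext rfl
    rw [hje] at hmono
    rw [hie] at h2'
    exact le_trans hmono h2'
  -- perturbed sequences
  set ε : ℕ → ℝ := fun n => 1/((n:ℝ)+1) with hεdef
  have hε : ∀ n, 0 < ε n := fun n => by positivity
  have hεlim : Tendsto ε atTop (𝓝 0) := tendsto_one_div_add_atTop_nhds_zero_nat
  set aseq : ℕ → Fin k → ℝ := fun n j => a j + (2*(k:ℝ) - 2*(j.val:ℝ) - 1) * ε n with haseq
  set bseq : ℕ → Fin k → ℝ := fun n j => b j + (2*(k:ℝ) - 2*(j.val:ℝ)) * ε n with hbseq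
  have hcoefb : ∀ j : Fin k, (2:ℝ) ≤ 2*(k:ℝ) - 2*(j.val:ℝ) := by
    intro j
    have h := j.isLt
    have : (j.val:ℝ) + 1 ≤ (k:ℝ) := by exact_mod_cast Nat.succ_le_of_lt h
    linarith
  have P3 : ∀ n (j : Fin k), 0 < bseq n j := by
    intro n j
    have := H4 j
    have := hcoefb j
    have := hε n
    simp only [hbseq]
    nlinarith
  have P1 : ∀ n (j : Fin k), (aseq n j)^2 < (bseq n j)^2 := by
    intro n j
    apply sq_lt_sq'
    · have := H5 j
      have := hcoefb j
      have := hε n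
      simp only [haseq, hbseq]
      nlinarith
    · have := H6 j
      have := hε n
      simp only [haseq, hbseq]
      nlinarith
  have P2 : ∀ n (i j : Fin k), i < j → (bseq n j)^2 < (aseq n i)^2 := by
    intro n i j hij
    have hlt : bseq n j < aseq n i := by
      have h := H2 i j hij
      have hij' : i.val < j.val := hij
      have hc : (i.val:ℝ) + 1 ≤ (j.val:ℝ) := by exact_mod_cast Nat.succ_le_of_lt hij'
      have := hε n
      simp only [haseq, hbseq]
      nlinarith
    apply sq_lt_sq'
    · have := P3 n j
      linarith
    · exact hlt
  -- apply the strict case for each n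
  have hstrict : ∀ n, ∃ Y, SOConj (Aodd k (aseq n) Y) (diagL (2*k+1) k (bseq n)) :=
    fun n => strict_case k hk (aseq n) (bseq n) (P1 n) (P2 n) (P3 n)
  choose Yn hYn using hstrict
  have hYn' : ∀ n, ∃ B : Matrix (Fin (2*k+1)) (Fin (2*k+1)) ℝ,
      Bᵀ * B = 1 ∧ B.det = 1 ∧ B * (Aodd k (aseq n) (Yn n)) * B⁻¹ = diagL (2*k+1) k (bseq n) :=
    fun n => hYn n
  choose Bn hBn1 hBn2 hBn3 using hYn'
  -- Mn = Bnᵀ Sn Bn equals Aodd (aseq n) (Yn n)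
  have hBninv : ∀ n, (Bn n)⁻¹ = (Bn n)ᵀ := fun n => Matrix.inv_eq_left_inv (hBn1 n)
  have hMn : ∀ n, (Bn n)ᵀ * diagL (2*k+1) k (bseq n) * Bn n = Aodd k (aseq n) (Yn n) := by
    intro n
    have e1 : Bn n * Aodd k (aseq n) (Yn n) * (Bn n)ᵀ = diagL (2*k+1) k (bseq n) := by
      rw [← hBninv n]; exact hBn3 n
    calc (Bn n)ᵀ * diagL (2*k+1) k (bseq n) * Bn n
        = (Bn n)ᵀ * (Bn n * Aodd k (aseq n) (Yn n) * (Bn n)ᵀ) * Bn n := by rw [e1]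
    _ = ((Bn n)ᵀ * Bn n) * Aodd k (aseq n) (Yn n) * ((Bn n)ᵀ * Bn n) := by
        simp only [Matrix.mul_assoc]
    _ = Aodd k (aseq n) (Yn n) := by rw [hBn1 n, Matrix.one_mul, Matrix.mul_one]
  -- bounds on entries
  have hBbd : ∀ n p q, |Bn n p q| ≤ 1 := by
    intro n p q
    have hsum : ∑ x, Bn n x q * Bn n x q = 1 := by
      have := congrFun (congrFun (hBn1 n) q) q
      rw [Matrix.mul_apply] at this
      simp only [Matrix.transpose_apply] at this
      rw [this, Matrix.one_apply_eq]
    have hle : Bn n p q * Bn n p q ≤ 1 := by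
      rw [← hsum]
      exact Finset.single_le_sum (f := fun x => Bn n x q * Bn n x q)
        (fun x _ => mul_self_nonneg _) (Finset.mem_univ p)
    rw [abs_le]; constructor <;> nlinarith
  set C0 : ℝ := (∑ l, |b l|) + 2*(k:ℝ) with hC0def
  have hC0 : 0 ≤ C0 := by
    have : (0:ℝ) ≤ ∑ l, |b l| := Finset.sum_nonneg fun l _ => abs_nonneg _
    have : (0:ℝ) ≤ (k:ℝ) := Nat.cast_nonneg k
    simp only [hC0def]
    linarith
  have hε1 : ∀ n, ε n ≤ 1 := by
    intro n
    rw [hεdef]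
    rw [div_le_one (by positivity)]
    simp
  have hbsbd : ∀ n (j : Fin k), |bseq n j| ≤ C0 := by
    intro n j
    have h1' : |b j| ≤ ∑ l, |b l| :=
      Finset.single_le_sum (f := fun l => |b l|) (fun l _ => abs_nonneg _) (Finset.mem_univ j)
    have h2' : |(2*(k:ℝ) - 2*(j.val:ℝ)) * ε n| ≤ 2*(k:ℝ) := by
      rw [abs_mul]
      have hc1 : |2*(k:ℝ) - 2*(j.val:ℝ)| ≤ 2*(k:ℝ) := by
        rw [abs_le]
        have : (0:ℝ) ≤ (j.val:ℝ) := Nat.cast_nonneg _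
        have := hcoefb j
        constructor <;> linarith
      have hc2 : |ε n| ≤ 1 := by rw [abs_of_pos (hε n)]; exact hε1 n
      calc |2*(k:ℝ) - 2*(j.val:ℝ)| * |ε n| ≤ (2*(k:ℝ)) * 1 :=
        mul_le_mul hc1 hc2 (abs_nonneg _) (by positivity)
      _ = 2*(k:ℝ) := mul_one _
    calc |bseq n j| ≤ |b j| + |(2*(k:ℝ) - 2*(j.val:ℝ)) * ε n| := abs_add_le _ _
    _ ≤ (∑ l, |b l|) + 2*(k:ℝ) := add_le_add h1' h2'
  set R : ℝ := ((2*k+1 : ℕ):ℝ)^2 * C0 with hRdef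
  have hMbd : ∀ n p q, |((Bn n)ᵀ * diagL (2*k+1) k (bseq n) * Bn n) p q| ≤ R := by
    intro n p q
    exact entry_bound (Bn n) _ (hBbd n) (fun p' q' => diagL_entry_bound _ hC0 (hbsbd n) p' q') p q
  -- compactness
  set K1 : Set (Fin (2*k+1) → Fin (2*k+1) → ℝ) :=
    Set.pi Set.univ (fun _ => Set.pi Set.univ fun _ => Set.Icc (-1:ℝ) 1) with hK1def
  set K2 : Set (Fin (2*k+1) → Fin (2*k+1) → ℝ) :=
    Set.pi Set.univ (fun _ => Set.pi Set.univ fun _ => Set.Icc (-R) R) with hK2def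
  have hK1 : IsCompact K1 := isCompact_univ_pi fun _ => isCompact_univ_pi fun _ => isCompact_Icc
  have hK2 : IsCompact K2 := isCompact_univ_pi fun _ => isCompact_univ_pi fun _ => isCompact_Icc
  set x : ℕ → ((Fin (2*k+1) → Fin (2*k+1) → ℝ) × (Fin (2*k+1) → Fin (2*k+1) → ℝ)) :=
    fun n => (fun p q => Bn n p q, fun p q => ((Bn n)ᵀ * diagL (2*k+1) k (bseq n) * Bn n) p q)
    with hx
  have hxmem : ∀ n, x n ∈ K1 ×ˢ K2 := by
    intro n
    constructor
    · intro p _; intro q _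
      simp only [hx]
      exact abs_le.mp (hBbd n p q)
    · intro p _; intro q _
      simp only [hx]
      exact abs_le.mp (hMbd n p q)
  obtain ⟨⟨Bl, Ml⟩, _, φ, hφ, hlim⟩ := (hK1.prod hK2).tendsto_subseq hxmem
  have hφtop : Tendsto φ atTop atTop := hφ.tendsto_atTop
  -- entrywise limits
  have hBlim : ∀ p q, Tendsto (fun n => Bn (φ n) p q) atTop (𝓝 (Bl p q)) := by
    intro p q
    have hcont : Continuous fun z : ((Fin (2*k+1) → Fin (2*k+1) → ℝ) × (Fin (2*k+1) → Fin (2*k+1) → ℝ)) => z.1 p q :=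
      (continuous_apply q).comp ((continuous_apply p).comp continuous_fst)
    exact (hcont.tendsto _).comp hlim
  have hMlim : ∀ p q, Tendsto (fun n => ((Bn (φ n))ᵀ * diagL (2*k+1) k (bseq (φ n)) * Bn (φ n)) p q)
      atTop (𝓝 (Ml p q)) := by
    intro p q
    have hcont : Continuous fun z : ((Fin (2*k+1) → Fin (2*k+1) → ℝ) × (Fin (2*k+1) → Fin (2*k+1) → ℝ)) => z.2 p q :=
      (continuous_apply q).comp ((continuous_apply p).comp continuous_snd)
    exact (hcont.tendsto _).comp hlim
  have hεφ : Tendsto (fun n => ε (φ n)) atTop (𝓝 0) := hεlim.comp hφtop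
  have hblim : ∀ j : Fin k, Tendsto (fun n => bseq (φ n) j) atTop (𝓝 (b j)) := by
    intro j
    have : Tendsto (fun n => b j + (2*(k:ℝ) - 2*(j.val:ℝ)) * ε (φ n)) atTop (𝓝 (b j + (2*(k:ℝ) - 2*(j.val:ℝ)) * 0)) :=
      tendsto_const_nhds.add (hεφ.const_mul _)
    simpa using this
  have halim : ∀ j : Fin k, Tendsto (fun n => aseq (φ n) j) atTop (𝓝 (a j)) := by
    intro j
    have : Tendsto (fun n => a j + (2*(k:ℝ) - 2*(j.val:ℝ) - 1) * ε (φ n)) atTop (𝓝 (a j + (2*(k:ℝ) - 2*(j.val:ℝ) - 1) * 0)) :=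
      tendsto_const_nhds.add (hεφ.const_mul _)
    simpa using this
  -- limit matrix equations
  set Bm : Matrix (Fin (2*k+1)) (Fin (2*k+1)) ℝ := Matrix.of Bl with hBm
  have hBlim' : ∀ p q, Tendsto (fun n => Bn (φ n) p q) atTop (𝓝 (Bm p q)) := hBlim
  have hB1 : Bmᵀ * Bm = 1 := by
    ext p q
    have hseq : ∀ n, ∑ z, Bn n z p * Bn n z q = (1 : Matrix (Fin (2*k+1)) (Fin (2*k+1)) ℝ) p q := by
      intro n
      have := congrFun (congrFun (hBn1 n) p) q
      rw [Matrix.mul_apply] at this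
      simpa [Matrix.transpose_apply] using this
    have ht1 : Tendsto (fun n => ∑ z, Bn (φ n) z p * Bn (φ n) z q) atTop
        (𝓝 (∑ z, Bm z p * Bm z q)) :=
      tendsto_finset_sum _ fun z _ => (hBlim' z p).mul (hBlim' z q)
    have ht2 : Tendsto (fun n => ∑ z, Bn (φ n) z p * Bn (φ n) z q) atTop
        (𝓝 ((1 : Matrix (Fin (2*k+1)) (Fin (2*k+1)) ℝ) p q)) := by
      rw [show (fun n => ∑ z, Bn (φ n) z p * Bn (φ n) z q)
        = fun _ => (1 : Matrix (Fin (2*k+1)) (Fin (2*k+1)) ℝ) p q from funext fun n => hseq (φ n)]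
      exact tendsto_const_nhds
    have := tendsto_nhds_unique ht1 ht2
    rw [Matrix.mul_apply]
    simpa [Matrix.transpose_apply] using this
  have hdetB : Bm.det = 1 := by
    have htm : Tendsto (fun n => (Bn (φ n) : Matrix (Fin (2*k+1)) (Fin (2*k+1)) ℝ)) atTop (𝓝 Bm) := by
      refine tendsto_pi_nhds.mpr ?_
      intro p
      rw [tendsto_pi_nhds]
      intro q
      exact hBlim' p q
    have ht1 : Tendsto (fun n => (Bn (φ n)).det) atTop (𝓝 Bm.det) :=
      ((Continuous.matrix_det continuous_id).tendsto Bm).comp htm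
    have ht2 : Tendsto (fun n => (Bn (φ n)).det) atTop (𝓝 1) := by
      rw [show (fun n => (Bn (φ n)).det) = fun _ => (1:ℝ) from funext fun n => hBn2 (φ n)]
      exact tendsto_const_nhds
    exact tendsto_nhds_unique ht1 ht2
  -- M limit equals Bmᵀ * S * Bm
  set S : Matrix (Fin (2*k+1)) (Fin (2*k+1)) ℝ := diagL (2*k+1) k b with hSdef
  set Mm : Matrix (Fin (2*k+1)) (Fin (2*k+1)) ℝ := Matrix.of Ml with hMm
  have hMlim' : ∀ p q, Tendsto (fun n => ((Bn (φ n))ᵀ * diagL (2*k+1) k (bseq (φ n)) * Bn (φ n)) p q)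
      atTop (𝓝 (Mm p q)) := hMlim
  have hMeq : Mm = Bmᵀ * S * Bm := by
    ext p q
    have ht1 : Tendsto (fun n => ((Bn (φ n))ᵀ * diagL (2*k+1) k (bseq (φ n)) * Bn (φ n)) p q)
        atTop (𝓝 ((Bmᵀ * S * Bm) p q)) := by
      have hform : ∀ (B' : Matrix (Fin (2*k+1)) (Fin (2*k+1)) ℝ) (S' : Matrix (Fin (2*k+1)) (Fin (2*k+1)) ℝ),
          (B'ᵀ * S' * B') p q = ∑ z, (∑ y, B' y p * S' y z) * B' z q := by
        intro B' S'
        rw [Matrix.mul_apply]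
        apply Finset.sum_congr rfl
        intro z _
        rw [Matrix.mul_apply]
        simp [Matrix.transpose_apply]
      rw [show (fun n => ((Bn (φ n))ᵀ * diagL (2*k+1) k (bseq (φ n)) * Bn (φ n)) p q)
        = fun n => ∑ z, (∑ y, Bn (φ n) y p * diagL (2*k+1) k (bseq (φ n)) y z) * Bn (φ n) z q
        from funext fun n => hform _ _]
      rw [hform Bm S]
      apply tendsto_finset_sum
      intro z _
      apply Tendsto.mul _ (hBlim' z q)
      apply tendsto_finset_sum
      intro y _
      exact (hBlim' y p).mul (diagL_tendsto _ b hblim y z)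
    exact tendsto_nhds_unique (hMlim' p q) ht1
  -- identify Mm as Aodd k a Yl
  set Yl : Fin (2*k) → ℝ := fun q => Mm ⟨q.val, by have := q.isLt; omega⟩ (lastI k) with hYl
  have hAoddM : Aodd k a Yl = Mm := by
    ext p q
    rcases lt_or_ge p.val (2*k) with hp | hp
    · rcases lt_or_ge q.val (2*k) with hq | hq
      · rw [Aodd_eq_diagL a Yl p q hp hq]
        have ht1 : Tendsto (fun n => ((Bn (φ n))ᵀ * diagL (2*k+1) k (bseq (φ n)) * Bn (φ n)) p q)
            atTop (𝓝 (diagL (2*k+1) k a p q)) := by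
          rw [show (fun n => ((Bn (φ n))ᵀ * diagL (2*k+1) k (bseq (φ n)) * Bn (φ n)) p q)
            = fun n => diagL (2*k+1) k (aseq (φ n)) p q from funext fun n => by
              rw [hMn (φ n)]
              exact Aodd_eq_diagL (aseq (φ n)) (Yn (φ n)) p q hp hq]
          exact diagL_tendsto _ a halim p q
        exact tendsto_nhds_unique ht1 (hMlim' p q)
      · have hql : q = lastI k := Fin.ext (by have := q.isLt; simp only [lastI_val]; omega)
        subst hql
        rw [Aodd_lastCol a Yl p hp]
    · have hpl : p = lastI k := Fin.ext (by have := p.isLt; simp only [lastI_val]; omega)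
      subst hpl
      rcases lt_or_ge q.val (2*k) with hq | hq
      · rw [Aodd_lastRow a Yl q hq]
        simp only [hYl]
        have hskewn : ∀ n, ((Bn n)ᵀ * diagL (2*k+1) k (bseq n) * Bn n) (lastI k) q
            = -(((Bn n)ᵀ * diagL (2*k+1) k (bseq n) * Bn n) ⟨q.val, by have := q.isLt; omega⟩ (lastI k)) := by
          intro n
          rw [hMn n]
          rw [Aodd_lastRow (aseq n) (Yn n) q hq,
            Aodd_lastCol (aseq n) (Yn n) ⟨q.val, by have := q.isLt; omega⟩ (by simpa using hq)]
        have ht1 : Tendsto (fun n => ((Bn (φ n))ᵀ * diagL (2*k+1) k (bseq (φ n)) * Bn (φ n)) (lastI k) q)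
            atTop (𝓝 (-(Mm ⟨q.val, by have := q.isLt; omega⟩ (lastI k)))) := by
          rw [show (fun n => ((Bn (φ n))ᵀ * diagL (2*k+1) k (bseq (φ n)) * Bn (φ n)) (lastI k) q)
            = fun n => -(((Bn (φ n))ᵀ * diagL (2*k+1) k (bseq (φ n)) * Bn (φ n)) ⟨q.val, by have := q.isLt; omega⟩ (lastI k))
            from funext fun n => hskewn (φ n)]
          exact (hMlim' _ _).neg
        exact tendsto_nhds_unique ht1 (hMlim' (lastI k) q)
      · have hql : q = lastI k := Fin.ext (by have := q.isLt; simp only [lastI_val]; omega)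
        subst hql
        rw [Aodd_corner a Yl]
        have hzn : ∀ n, ((Bn n)ᵀ * diagL (2*k+1) k (bseq n) * Bn n) (lastI k) (lastI k) = 0 := by
          intro n
          rw [hMn n]
          exact Aodd_corner (aseq n) (Yn n)
        have ht1 : Tendsto (fun n => ((Bn (φ n))ᵀ * diagL (2*k+1) k (bseq (φ n)) * Bn (φ n)) (lastI k) (lastI k))
            atTop (𝓝 0) := by
          rw [show (fun n => ((Bn (φ n))ᵀ * diagL (2*k+1) k (bseq (φ n)) * Bn (φ n)) (lastI k) (lastI k))
            = fun _ => (0:ℝ) from funext fun n => hzn (φ n)]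
          exact tendsto_const_nhds
        exact tendsto_nhds_unique ht1 (hMlim' (lastI k) (lastI k))
  -- conclude
  refine ⟨Yl, Bm, hB1, hdetB, ?_⟩
  rw [Matrix.inv_eq_left_inv hB1, hAoddM, hMeq]
  have hBBT : Bm * Bmᵀ = 1 := mul_eq_one_comm.mp hB1
  calc Bm * (Bmᵀ * S * Bm) * Bmᵀ = (Bm * Bmᵀ) * S * (Bm * Bmᵀ) := by simp only [Matrix.mul_assoc]
  _ = S := by rw [hBBT, Matrix.one_mul, Matrix.mul_one]

end OpenOddProof
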